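/- Let C be a column of type B or D which does not contain any pair (z, z̄) with z ≤ n unbarred and N(z) > z, and which is not admissible. Then the height of C exceeds n, C is of type B, and 0 is a letter of C. -/

import Mathlib

/-- Rank of a letter of the alphabet `B_n = {1 ≺ ⋯ ≺ n ≺ 0 ≺ n̄ ≺ ⋯ ≺ 1̄}`,
where the letter `i` is encoded by the integer `i`, `0` by `0` and `ī` by `-i`. -/
def rankB (n : ℕ) (v : ℤ) : ℤ :=
  if 0 < v then v else if v = 0 then (n : ℤ) + 1 else 2 * (n : ℤ) + 2 + v

/-- `C` is a column of type `B`: letters of `B_n`, strictly increasing from top to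
bottom except that the letter `0` may repeat. -/
def IsColB (n : ℕ) (C : List ℤ) : Prop :=
  (∀ v ∈ C, v.natAbs ≤ n) ∧
  C.Chain' (fun a b => rankB n a < rankB n b ∨ (a = 0 ∧ b = 0))

/-- Rank of a letter of `D_n`; the letters `n` and `n̄` share the same rank
(they are incomparable). -/
def rankD (n : ℕ) (v : ℤ) : ℤ :=
  if 0 < v then v else 2 * (n : ℤ) + v

/-- `C` is a column of type `D`: letters of `D_n` with `x_{i+1} ⋠ x_i`. -/
def IsColD (n : ℕ) (C : List ℤ) : Prop :=
  (∀ v ∈ C, 1 ≤ v.natAbs ∧ v.natAbs ≤ n) ∧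
  C.Chain' (fun a b => rankD n a ≤ rankD n b ∧ a ≠ b)

/-- `N(z)`: the number of letters `x` of `C` with `x ⪯ z` or `x ⪰ z̄`,
for an unbarred letter `z`; these are exactly the nonzero letters of absolute
value at most `z`. -/
def Ncount (n : ℕ) (C : List ℤ) (z : ℤ) : ℕ :=
  (C.filter (fun v => decide (v ≠ 0 ∧ (v.natAbs : ℤ) ≤ z))).length

/-- Kashiwara–Nakashima admissibility: height at most `n` and `N(z) ≤ z` for
every pair `(z, z̄)` with `z ⪯ n` unbarred occurring in `C`. -/
def Admissible (n : ℕ) (C : List ℤ) : Prop :=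
  C.length ≤ n ∧
  ∀ z : ℤ, 1 ≤ z → z ≤ (n : ℤ) → z ∈ C → -z ∈ C → (Ncount n C z : ℤ) ≤ z

lemma mem_pair (C : List ℤ) (x : ℤ) (hx : x ∈ C) (hx' : -x ∈ C) :
    ((x.natAbs : ℤ) ∈ C ∧ -(x.natAbs : ℤ) ∈ C) := by
  rcases Int.natAbs_eq x with h | h
  · rw [h] at hx hx'; exact ⟨hx, hx'⟩
  · rw [h] at hx hx'; rw [neg_neg] at hx'; exact ⟨hx', hx⟩

lemma nodup_len_le (k m : ℕ) (l : List ℤ)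
    (hmem : ∀ v ∈ l, k < v.natAbs ∧ v.natAbs ≤ m)
    (hnd : (l.map Int.natAbs).Nodup) : l.length ≤ m - k := by
  classical
  have h1 : (l.map Int.natAbs).toFinset ⊆ Finset.Ioc k m := by
    intro a ha
    simp only [List.mem_toFinset, List.mem_map] at ha
    obtain ⟨v, hv, rfl⟩ := ha
    exact Finset.mem_Ioc.mpr (hmem v hv)
  have h2 := Finset.card_le_card h1
  rwa [List.toFinset_card_of_nodup hnd, List.length_map, Nat.card_Ioc] at h2

lemma key (n : ℕ) (C : List ℤ)
    (hmem : ∀ v ∈ C, v ≠ 0 ∧ v.natAbs ≤ n)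
    (hpair : C.Pairwise (fun x y => x.natAbs = y.natAbs →
      ((x.natAbs : ℤ) ∈ C ∧ -(x.natAbs : ℤ) ∈ C)))
    (hnopair : ∀ z : ℤ, 1 ≤ z → z ≤ (n : ℤ) → z ∈ C → -z ∈ C →
      (Ncount n C z : ℤ) ≤ z) :
    C.length ≤ n := by
  classical
  set P : Finset ℕ := (Finset.Icc 1 n).filter (fun a => (a : ℤ) ∈ C ∧ -(a : ℤ) ∈ C) with hP
  by_cases hPe : P.Nonempty
  · obtain ⟨z0, hz0P, hz0max⟩ : ∃ z0 ∈ P, ∀ a ∈ P, a ≤ z0 :=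
      ⟨P.max' hPe, P.max'_mem hPe, fun a ha => P.le_max' a ha⟩
    rw [hP, Finset.mem_filter, Finset.mem_Icc] at hz0P
    obtain ⟨⟨hz1, hz2⟩, hzc, hzc'⟩ := hz0P
    have hN := hnopair (z0 : ℤ) (by exact_mod_cast hz1) (by exact_mod_cast hz2) hzc hzc'
    have hfc : C.filter (fun v => decide (v ≠ 0 ∧ (v.natAbs : ℤ) ≤ (z0 : ℤ)))
        = C.filter (fun v => decide (v.natAbs ≤ z0)) := by
      apply List.filter_congr
      intro v hv
      have hv0 := (hmem v hv).1
      rw [decide_eq_decide]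
      constructor
      · rintro ⟨-, h⟩; exact_mod_cast h
      · intro h; exact ⟨hv0, by exact_mod_cast h⟩
    have hsplit := C.length_eq_length_filter_add (fun v => decide (v.natAbs ≤ z0))
    have hbound : (C.filter (fun v => !decide (v.natAbs ≤ z0))).length ≤ n - z0 := by
      apply nodup_len_le z0 n
      · intro v hv
        have hvf := List.of_mem_filter hv
        have hvC := List.mem_of_mem_filter hv
        simp only [Bool.not_eq_true', decide_eq_false_iff_not, not_le] at hvf
        exact ⟨hvf, (hmem v hvC).2⟩
      · rw [List.Nodup, List.pairwise_map]
        have hsub : (C.filter (fun v => !decide (v.natAbs ≤ z0))).Pairwise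
            (fun x y => x.natAbs = y.natAbs →
              ((x.natAbs : ℤ) ∈ C ∧ -(x.natAbs : ℤ) ∈ C)) :=
          hpair.sublist (List.filter_sublist (l := C))
        refine hsub.imp_of_mem ?_
        intro x y hx hy hxy heq
        have hxf := List.of_mem_filter hx
        have hxC := List.mem_of_mem_filter hx
        simp only [Bool.not_eq_true', decide_eq_false_iff_not, not_le] at hxf
        obtain ⟨hc1, hc2⟩ := hxy heq
        have hx1 : 1 ≤ x.natAbs := by
          have := (hmem x hxC).1; omega
        have hmemP : x.natAbs ∈ P := by
          rw [hP, Finset.mem_filter, Finset.mem_Icc]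
          exact ⟨⟨hx1, (hmem x hxC).2⟩, hc1, hc2⟩
        have := hz0max _ hmemP
        omega
    have hNlen : (C.filter (fun v => decide (v.natAbs ≤ z0))).length ≤ z0 := by
      have : (Ncount n C (z0 : ℤ) : ℤ) ≤ (z0 : ℤ) := hN
      have h2 : Ncount n C (z0 : ℤ) ≤ z0 := by exact_mod_cast this
      unfold Ncount at h2
      rwa [hfc] at h2
    omega
  · have : C.length ≤ n - 0 := by
      apply nodup_len_le 0 n
      · intro v hv
        have := hmem v hv
        constructor
        · omega
        · exact this.2
      · rw [List.Nodup, List.pairwise_map]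
        refine hpair.imp_of_mem ?_
        intro x y hx hy hxy heq
        obtain ⟨hc1, hc2⟩ := hxy heq
        have hx1 : 1 ≤ x.natAbs := by have := (hmem x hx).1; omega
        apply hPe
        refine ⟨x.natAbs, ?_⟩
        rw [hP, Finset.mem_filter, Finset.mem_Icc]
        exact ⟨⟨hx1, (hmem x hx).2⟩, hc1, hc2⟩
    omega

lemma pairB (n : ℕ) (C : List ℤ) (h : IsColB n C) (h0 : (0 : ℤ) ∉ C) :
    C.Pairwise (fun x y => x.natAbs = y.natAbs →
      ((x.natAbs : ℤ) ∈ C ∧ -(x.natAbs : ℤ) ∈ C)) := by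
  obtain ⟨hmem, hch⟩ := h
  haveI : IsTrans ℤ (fun a b => rankB n a < rankB n b ∨ (a = 0 ∧ b = 0)) := by
    constructor
    intro a b c hab hbc
    rcases hab with h1 | ⟨ha, hb⟩ <;> rcases hbc with h2 | ⟨hb', hc⟩
    · exact Or.inl (h1.trans h2)
    · subst hb' hc; exact Or.inl h1
    · subst ha hb; exact Or.inl h2
    · exact Or.inr ⟨ha, hc⟩
  have hpw := List.isChain_iff_pairwise.mp hch
  refine hpw.imp_of_mem ?_
  intro x y hx hy hxy heq
  have hx0 : x ≠ 0 := fun h => h0 (h ▸ hx)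
  rcases hxy with hlt | ⟨rfl, -⟩
  · have hne : x ≠ y := by
      rintro rfl; exact lt_irrefl _ hlt
    have : x = -y := by
      rcases Int.natAbs_eq_natAbs_iff.mp heq with h | h
      · exact absurd h hne
      · exact h
    have hy' : -x ∈ C := by rw [this, neg_neg]; exact hy
    exact mem_pair C x hx hy'
  · exact absurd rfl hx0

lemma rankD_eq_cases (n : ℕ) (u w : ℤ) (hu1 : 1 ≤ u.natAbs) (hu2 : u.natAbs ≤ n)
    (hw1 : 1 ≤ w.natAbs) (hw2 : w.natAbs ≤ n) (hr : rankD n u = rankD n w)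
    (hne : u ≠ w) : w = -u := by
  unfold rankD at hr
  split_ifs at hr <;> omega

lemma pairD (n : ℕ) (C : List ℤ) (h : IsColD n C) :
    C.Pairwise (fun x y => x.natAbs = y.natAbs →
      ((x.natAbs : ℤ) ∈ C ∧ -(x.natAbs : ℤ) ∈ C)) := by
  obtain ⟨hmem, hch⟩ := h
  have hch2 : C.Chain' (fun a b => rankD n a ≤ rankD n b) := List.IsChain.imp (fun a b hab => hab.1) hch
  haveI : IsTrans ℤ (fun a b => rankD n a ≤ rankD n b) := ⟨fun a b c => le_trans⟩
  have hpw := List.isChain_iff_pairwise.mp hch2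
  rw [List.pairwise_iff_get] at hpw ⊢
  replace hch := List.isChain_iff_getElem.mp hch
  intro i j hij heq
  have hiC : C.get i ∈ C := C.get_mem _
  have hjC : C.get j ∈ C := C.get_mem _
  by_cases hxy : C.get i = C.get j
  · -- repeated letter: the letter in between is its negative
    have hj : (j : ℕ) < C.length := j.2
    have hi1 : (i : ℕ) + 1 < C.length := by
      have : (i : ℕ) < (j : ℕ) := hij
      omega
    have hlt : (i : ℕ) < C.length - 1 := by omega
    have hadj := hch i hi1
    set w : ℤ := C.get ⟨(i : ℕ) + 1, by omega⟩ with hw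
    have hwC : w ∈ C := C.get_mem _
    have hr1 : rankD n (C.get i) ≤ rankD n w := by
      have h1 := hadj.1
      simpa [hw] using h1
    have hr2 : rankD n w ≤ rankD n (C.get j) := by
      rcases Nat.lt_or_ge ((i : ℕ) + 1) (j : ℕ) with hlt2 | hge
      · exact hpw ⟨(i : ℕ) + 1, by omega⟩ j hlt2
      · have : ((i : ℕ) + 1) = (j : ℕ) := by
          have : (i : ℕ) < (j : ℕ) := hij
          omega
        have : w = C.get j := by
          rw [hw]
          congr 1
          exact Fin.ext this
        rw [this]
    have hne : C.get i ≠ w := by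
      have h2 := hadj.2
      simpa [hw] using h2
    have hr2' : rankD n w ≤ rankD n (C.get i) := by
      rw [hxy]; exact hr2
    have hreq : rankD n (C.get i) = rankD n w := le_antisymm hr1 hr2' 
    have hwneg : w = -(C.get i) :=
      rankD_eq_cases n (C.get i) w (hmem _ hiC).1 (hmem _ hiC).2
        (hmem _ hwC).1 (hmem _ hwC).2 hreq (fun hc => hne hc)
    have : -(C.get i) ∈ C := hwneg ▸ hwC
    exact mem_pair C (C.get i) hiC this
  · have : C.get i = -(C.get j) := by
      rcases Int.natAbs_eq_natAbs_iff.mp heq with h | h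
      · exact absurd h hxy
      · exact h
    have hy' : -(C.get i) ∈ C := by rw [this, neg_neg]; exact hjC
    exact mem_pair C (C.get i) hiC hy'

/-- Let `C` be a column of type `B` or `D` which does not
contain any pair `(z, z̄)` with `z ⪯ n` unbarred and `N(z) > z`, and which is
not admissible.  Then the height of `C` exceeds `n`, `C` is of type `B`, and
`0` is a letter of `C`. -/
theorem stmt1 (n : ℕ) (C : List ℤ)
    (hcol : IsColB n C ∨ IsColD n C)
    (hnopair : ∀ z : ℤ, 1 ≤ z → z ≤ (n : ℤ) → z ∈ C → -z ∈ C →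
      (Ncount n C z : ℤ) ≤ z)
    (hnadm : ¬ Admissible n C) :
    n < C.length ∧ IsColB n C ∧ (0 : ℤ) ∈ C := by
  have hlen : n < C.length := by
    by_contra h
    exact hnadm ⟨Nat.le_of_not_lt h, hnopair⟩
  rcases hcol with hB | hD
  · by_cases h0 : (0 : ℤ) ∈ C
    · exact ⟨hlen, hB, h0⟩
    · exfalso
      have hkey := key n C (fun v hv => ⟨fun hz => h0 (hz ▸ hv), hB.1 v hv⟩)
        (pairB n C hB h0) hnopair
      omega
  · exfalso
    have hm : ∀ v ∈ C, v ≠ 0 ∧ v.natAbs ≤ n := by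
      intro v hv
      have h1 := (hD.1 v hv).1
      have h2 := (hD.1 v hv).2
      exact ⟨by omega, h2⟩
    have hkey := key n C hm (pairD n C hD) hnopair
    omega
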